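/- Let A be a normed *-algebra (involution not assumed continuous), let H be a complex Hilbert space, and let π : A → B(H) be a *-algebra homomorphism into the bounded operators on H. Assume π is weakly continuous on the Hermitian part of A: for each x ∈ H there is a constant C ≥ 0 such that |⟨π(a)x, x⟩| ≤ C‖a‖ for all Hermitian a ∈ A. Then ‖π(a)‖ ≤ r_σ(a) for every a ∈ A, where r_σ(a) := (inf_{n ≥ 1} ‖(a* a)^n‖^{1/n})^{1/2}. -/

import Mathlib

/-- `nupow b n = b ^ (n + 1)`, the `(n+1)`-st power of `b`, which makes sense in a
not necessarily unital algebra. -/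
def nupow {A : Type*} [Mul A] (b : A) : ℕ → A
  | 0 => b
  | n + 1 => nupow b n * b

section aux

lemma nupow_mul_nupow {A : Type*} [Semigroup A] (b : A) (p q : ℕ) :
    nupow b p * nupow b q = nupow b (p + q + 1) := by
  induction q with
  | zero => rfl
  | succ q ih =>
    show nupow b p * (nupow b q * b) = _
    rw [← mul_assoc, ih]; rfl

lemma nupow_nupow {A : Type*} [Semigroup A] (b : A) (n k : ℕ) :
    nupow (nupow b n) k = nupow b (n + k + n * k) := by
  induction k with
  | zero => simp [nupow]
  | succ k ih =>
    show nupow (nupow b n) k * nupow b n = _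
    rw [ih, nupow_mul_nupow]
    congr 1
    ring

lemma norm_nupow_le {A : Type*} [NonUnitalSeminormedRing A] (b : A) (k : ℕ) :
    ‖nupow b k‖ ≤ ‖b‖ ^ (k + 1) := by
  induction k with
  | zero => simp [nupow]
  | succ k ih =>
    calc ‖nupow b k * b‖ ≤ ‖nupow b k‖ * ‖b‖ := norm_mul_le _ _
    _ ≤ ‖b‖ ^ (k + 1) * ‖b‖ := by
        exact mul_le_mul_of_nonneg_right ih (norm_nonneg _)
    _ = ‖b‖ ^ (k + 2) := by ring

lemma nupow_comm {A : Type*} [Semigroup A] (b : A) (n : ℕ) :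
    b * nupow b n = nupow b n * b := by
  induction n with
  | zero => rfl
  | succ n ih =>
    show b * (nupow b n * b) = _
    rw [← mul_assoc, ih]
    rfl

lemma IsSelfAdjoint.nupow {A : Type*} [Semigroup A] [StarMul A] {b : A}
    (hb : IsSelfAdjoint b) (n : ℕ) : IsSelfAdjoint (_root_.nupow b n) := by
  induction n with
  | zero => exact hb
  | succ n ih =>
    show IsSelfAdjoint (_root_.nupow b n * b)
    rw [IsSelfAdjoint, star_mul, ih.star_eq, hb.star_eq, nupow_comm]

lemma nupow_eq_pow {M : Type*} [Monoid M] (b : M) (n : ℕ) :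
    nupow b n = b ^ (n + 1) := by
  induction n with
  | zero => simp [nupow]
  | succ n ih => show nupow b n * b = _; rw [ih, ← pow_succ]

lemma aux_le_of_pow {x y C : ℝ} (hx : 0 ≤ x) (hy : 0 ≤ y)
    (h : ∀ k : ℕ, x ^ (k + 1) ≤ C * y ^ (k + 1)) : x ≤ y := by
  by_contra hlt
  push_neg at hlt
  have hx0 : 0 < x := lt_of_le_of_lt hy hlt
  have hr : 0 ≤ y / x := div_nonneg hy hx0.le
  have hr1 : y / x < 1 := (div_lt_one hx0).2 hlt
  have hone : ∀ k : ℕ, (1 : ℝ) ≤ C * (y / x) ^ (k + 1) := by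
    intro k
    have hpos : 0 < x ^ (k + 1) := pow_pos hx0 _
    rw [div_pow, ← mul_div_assoc, le_div_iff₀ hpos, one_mul]
    exact h k
  have htend : Filter.Tendsto (fun k : ℕ => C * (y / x) ^ (k + 1))
      Filter.atTop (nhds 0) := by
    have h1 : Filter.Tendsto (fun k : ℕ => (y / x) ^ (k + 1))
        Filter.atTop (nhds 0) :=
      (tendsto_pow_atTop_nhds_zero_of_lt_one hr hr1).comp
        (Filter.tendsto_add_atTop_nat 1)
    simpa using h1.const_mul C
  have := (htend.eventually_lt_const zero_lt_one).exists
  obtain ⟨k, hk⟩ := this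
  exact absurd (hone k) (not_le.2 hk)

lemma sa_pow_norm_le {E : Type*} [NormedRing E] [StarRing E] [CStarRing E]
    {S : E} (hS : IsSelfAdjoint S) (N : ℕ) (hN : 1 ≤ N) : ‖S‖ ^ N ≤ ‖S ^ N‖ := by
  rcases eq_or_lt_of_le (norm_nonneg S) with h0 | h0
  · have : S = 0 := norm_eq_zero.1 h0.symm
    subst this
    simp [zero_pow (Nat.one_le_iff_ne_zero.1 hN)]
  · have h2 : ‖S‖ ^ (2 ^ N) = ‖S ^ (2 ^ N)‖ := by
      have h := congrArg (fun t : NNReal => (t : ℝ)) (hS.nnnorm_pow_two_pow N)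
      simpa using h.symm
    have hNle : N ≤ 2 ^ N := (Nat.lt_two_pow_self (n := N)).le
    have hpos : 0 < 2 ^ N - N := Nat.sub_pos_of_lt (Nat.lt_two_pow_self (n := N))
    have hsplit : S ^ (2 ^ N) = S ^ N * S ^ (2 ^ N - N) := by
      rw [← pow_add, Nat.add_sub_cancel' hNle]
    have hle : ‖S ^ (2 ^ N)‖ ≤ ‖S ^ N‖ * ‖S‖ ^ (2 ^ N - N) := by
      rw [hsplit]
      calc ‖S ^ N * S ^ (2 ^ N - N)‖ ≤ ‖S ^ N‖ * ‖S ^ (2 ^ N - N)‖ := norm_mul_le _ _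
      _ ≤ ‖S ^ N‖ * ‖S‖ ^ (2 ^ N - N) :=
          mul_le_mul_of_nonneg_left (norm_pow_le' S hpos) (norm_nonneg _)
    have hkey : ‖S‖ ^ N * ‖S‖ ^ (2 ^ N - N) ≤ ‖S ^ N‖ * ‖S‖ ^ (2 ^ N - N) := by
      rw [← pow_add, Nat.add_sub_cancel' hNle, h2]
      exact hle
    exact le_of_mul_le_mul_right hkey (pow_pos h0 _)

end aux

/-- If a representation `π` of a normed `*`-algebra `A` on a Hilbert space `H` is weakly
continuous on the Hermitian part of `A`, then `‖π a‖ ≤ r_σ(a)` for every `a ∈ A`, where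
`r_σ(a) = (inf_{n ≥ 1} ‖(a* a)^n‖^(1/n))^(1/2)` is the Pták function. -/
theorem norm_apply_le_ptak_of_weakly_continuous
    {A : Type*} [NonUnitalNormedRing A] [NormedSpace ℂ A]
    [IsScalarTower ℂ A A] [SMulCommClass ℂ A A] [StarRing A] [StarModule ℂ A]
    {H : Type*} [NormedAddCommGroup H] [InnerProductSpace ℂ H] [CompleteSpace H]
    (π : A →⋆ₙₐ[ℂ] (H →L[ℂ] H))
    (hw : ∀ x : H, ∃ C : ℝ, 0 ≤ C ∧
      ∀ a : A, IsSelfAdjoint a → ‖(inner ℂ (π a x) x : ℂ)‖ ≤ C * ‖a‖) :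
    ∀ a : A, ‖π a‖ ≤
      Real.sqrt (⨅ n : ℕ, ‖nupow (star a * a) n‖ ^ (1 / (n + 1 : ℝ))) := by
  -- Step 1: a uniform bound on the Hermitian part via Banach–Steinhaus
  obtain ⟨C, hC0, hCb⟩ : ∃ C : ℝ, 0 ≤ C ∧ ∀ c : A, IsSelfAdjoint c → ‖π c‖ ≤ C * ‖c‖ := by
    set ι := {c : A // IsSelfAdjoint c ∧ ‖c‖ ≤ 1}
    have hpt : ∀ x : H, ∃ D : ℝ, ∀ i : ι, ‖π i.1 x‖ ≤ D := by
      intro x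
      obtain ⟨D, hD0, hD⟩ := hw x
      refine ⟨Real.sqrt D, fun i => ?_⟩
      obtain ⟨c, hc, hc1⟩ := i
      have hsq : (inner ℂ (π (c * c) x) x : ℂ) = ((‖π c x‖ : ℂ)) ^ 2 := by
        have h1 : π (c * c) x = π c (π c x) := by rw [map_mul]; rfl
        have h2 : π c = ContinuousLinearMap.adjoint (π c) := by
          rw [← ContinuousLinearMap.star_eq_adjoint, ← map_star, hc.star_eq]
        rw [h1]
        nth_rw 1 [h2]
        rw [ContinuousLinearMap.adjoint_inner_left, inner_self_eq_norm_sq_to_K]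
        norm_cast
      have hcc : IsSelfAdjoint (c * c) := by
        rw [IsSelfAdjoint, star_mul, hc.star_eq]
      have hb := hD (c * c) hcc
      rw [hsq] at hb
      have hnorm : ‖((‖π c x‖ : ℂ)) ^ 2‖ = ‖π c x‖ ^ 2 := by
        rw [norm_pow, Complex.norm_real, Real.norm_of_nonneg (norm_nonneg _)]
      rw [hnorm] at hb
      have hle : ‖π c x‖ ^ 2 ≤ D := by
        refine hb.trans ?_
        calc D * ‖c * c‖ ≤ D * (‖c‖ * ‖c‖) :=
              mul_le_mul_of_nonneg_left (norm_mul_le _ _) hD0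
        _ ≤ D * (1 * 1) := by
              exact mul_le_mul_of_nonneg_left
                (mul_le_mul hc1 hc1 (norm_nonneg _) zero_le_one) hD0
        _ = D := by ring
      exact (Real.le_sqrt (norm_nonneg _) hD0).2 hle
    obtain ⟨C', hC'⟩ := banach_steinhaus hpt
    refine ⟨max C' 0, le_max_right _ _, fun c hc => ?_⟩
    rcases eq_or_ne c 0 with rfl | hne
    · simp
    · have hcpos : 0 < ‖c‖ := norm_pos_iff.2 hne
      set u : A := ((‖c‖ : ℂ))⁻¹ • c with hu
      have hu_sa : IsSelfAdjoint u := by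
        rw [IsSelfAdjoint, hu, star_smul, hc.star_eq, star_inv₀, Complex.star_def,
          Complex.conj_ofReal]
      have hu_norm : ‖u‖ = 1 := by
        rw [hu, norm_smul, norm_inv, Complex.norm_real,
          Real.norm_of_nonneg (norm_nonneg _), inv_mul_cancel₀ hcpos.ne']
      have := hC' ⟨u, hu_sa, hu_norm.le⟩
      have hπu : π u = ((‖c‖ : ℂ))⁻¹ • π c := by rw [hu, map_smul]
      rw [hπu, norm_smul, norm_inv, Complex.norm_real,
        Real.norm_of_nonneg (norm_nonneg _)] at this
      have : ‖π c‖ ≤ C' * ‖c‖ := by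
        rw [inv_mul_le_iff₀ hcpos] at this
        linarith [this]
      calc ‖π c‖ ≤ C' * ‖c‖ := this
      _ ≤ max C' 0 * ‖c‖ :=
          mul_le_mul_of_nonneg_right (le_max_left _ _) (norm_nonneg _)
  intro a
  set b : A := star a * a with hbdef
  have hb : IsSelfAdjoint b := IsSelfAdjoint.star_mul_self a
  set S : H →L[ℂ] H := π b with hSdef
  have hS : IsSelfAdjoint S := by
    rw [IsSelfAdjoint, hSdef, ← map_star, hb.star_eq]
  -- Step 2: ‖S‖ ≤ ‖nupow b n‖ ^ (1/(n+1)) for every n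
  have hmain : ∀ n : ℕ, ‖S‖ ≤ ‖nupow b n‖ ^ (1 / (n + 1 : ℝ)) := by
    intro n
    have hπ_nupow : ∀ m : ℕ, π (nupow b m) = S ^ (m + 1) := by
      intro m
      induction m with
      | zero => simp [nupow, hSdef]
      | succ m ih =>
        show π (nupow b m * b) = _
        rw [map_mul, ih, ← hSdef, ← pow_succ]
    have hpow : ‖S‖ ^ (n + 1) ≤ ‖nupow b n‖ := by
      refine aux_le_of_pow (pow_nonneg (norm_nonneg _) _) (norm_nonneg _) (fun k => ?_) (C := C)
      have hN1 : 1 ≤ (n + 1) * (k + 1) := Nat.one_le_iff_ne_zero.2 (by positivity)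
      have e1 : ((‖S‖ ^ (n + 1)) ^ (k + 1)) = ‖S‖ ^ ((n + 1) * (k + 1)) := by
        rw [← pow_mul]
      have e2 : (n + 1) * (k + 1) = (n + k + n * k) + 1 := by ring
      calc (‖S‖ ^ (n + 1)) ^ (k + 1) = ‖S‖ ^ ((n + 1) * (k + 1)) := e1
      _ ≤ ‖S ^ ((n + 1) * (k + 1))‖ := sa_pow_norm_le hS _ hN1
      _ = ‖π (nupow b (n + k + n * k))‖ := by rw [hπ_nupow, e2]
      _ ≤ C * ‖nupow b (n + k + n * k)‖ := hCb _ (hb.nupow _)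
      _ = C * ‖nupow (nupow b n) k‖ := by rw [nupow_nupow]
      _ ≤ C * ‖nupow b n‖ ^ (k + 1) :=
          mul_le_mul_of_nonneg_left (norm_nupow_le _ _) hC0
    have hrpow : ‖S‖ = (‖S‖ ^ (n + 1 : ℕ)) ^ (1 / (n + 1 : ℝ)) := by
      rw [← Real.rpow_natCast ‖S‖ (n + 1), ← Real.rpow_mul (norm_nonneg _)]
      push_cast
      rw [mul_one_div, div_self (by positivity), Real.rpow_one]
    rw [hrpow]
    exact Real.rpow_le_rpow (pow_nonneg (norm_nonneg _) _) hpow (by positivity)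
  have hinf : ‖S‖ ≤ ⨅ n : ℕ, ‖nupow b n‖ ^ (1 / (n + 1 : ℝ)) := le_ciInf hmain
  have hnorm_sq : ‖S‖ = ‖π a‖ * ‖π a‖ := by
    rw [hSdef, hbdef, map_mul, map_star, CStarRing.norm_star_mul_self]
  calc ‖π a‖ = Real.sqrt (‖π a‖ * ‖π a‖) := (Real.sqrt_mul_self (norm_nonneg _)).symm
  _ = Real.sqrt ‖S‖ := by rw [hnorm_sq]
  _ ≤ _ := Real.sqrt_le_sqrt hinf
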